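/- Let X_1, X_2, ... be an i.i.d. sequence of real-valued random variables with common distribution function F, and let F_n denote the empirical distribution function of the first n observations. Fix p ∈ (0,1). Then almost surely, limsup_{n→∞} rq_{F_n}(p) = rq_F(p) and liminf_{n→∞} rq_{F_n}(p) = lq_F(p). -/

import Mathlib

open MeasureTheory ProbabilityTheory Filter
open scoped Topology NNReal

/-- Left quantile of a distribution function `F` at level `p`:
`lq F p = inf {x | F x ≥ p}`. -/
noncomputable def lq (F : ℝ → ℝ) (p : ℝ) : ℝ := sInf {x : ℝ | p ≤ F x}

/-- Right quantile of a distribution function `F` at level `p`: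
`rq F p = inf {x | F x > p}`. -/
noncomputable def rq (F : ℝ → ℝ) (p : ℝ) : ℝ := sInf {x : ℝ | p < F x}

/-- Empirical distribution function of the first `n` observations `X 0, ..., X (n-1)`:
`edf X n ω x = (1/n) * #{i < n | X i ω ≤ x}`. -/
noncomputable def edf {Ω : Type*} (X : ℕ → Ω → ℝ) (n : ℕ) (ω : Ω) (x : ℝ) : ℝ :=
  ((Finset.range n).filter (fun i => X i ω ≤ x)).card / n

lemma rq_le_of {G : ℝ → ℝ} {p a b : ℝ} (hG : Monotone G) (ha : G a ≤ p) (hb : p < G b) :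
    rq G p ≤ b :=
  csInf_le ⟨a, fun y hy => le_of_not_gt fun h => absurd ((hG h.le).trans ha) (not_le.2 hy)⟩ hb

lemma le_rq_of {G : ℝ → ℝ} {p a b : ℝ} (hG : Monotone G) (ha : G a ≤ p) (hb : p < G b) :
    a ≤ rq G p :=
  le_csInf ⟨b, hb⟩ fun y hy => le_of_not_gt fun h => absurd ((hG h.le).trans ha) (not_le.2 hy)

lemma lq_le_of {G : ℝ → ℝ} {p a b : ℝ} (hG : Monotone G) (ha : G a < p) (hb : p ≤ G b) :
    lq G p ≤ b :=
  csInf_le ⟨a, fun y hy => le_of_not_gt fun h => absurd ((hG h.le).trans_lt ha) (not_lt.2 hy)⟩ hb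

lemma le_lq_of {G : ℝ → ℝ} {p a b : ℝ} (hG : Monotone G) (ha : G a < p) (hb : p ≤ G b) :
    a ≤ lq G p :=
  le_csInf ⟨b, hb⟩ fun y hy => le_of_not_gt fun h => absurd ((hG h.le).trans_lt ha) (not_lt.2 hy)

lemma edf_mono {Ω : Type*} (X : ℕ → Ω → ℝ) (n : ℕ) (ω : Ω) : Monotone (edf X n ω) := by
  intro x y hxy
  unfold edf
  rw [div_eq_mul_inv, div_eq_mul_inv]
  refine mul_le_mul_of_nonneg_right ?_ (inv_nonneg.2 (Nat.cast_nonneg n))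
  exact_mod_cast Finset.card_le_card (Finset.monotone_filter_right _
      (fun i _ hi => le_trans hi hxy))

lemma edf_eq_sum {Ω : Type*} (X : ℕ → Ω → ℝ) (n : ℕ) (ω : Ω) (x : ℝ) :
    edf X n ω x = (∑ i ∈ Finset.range n, if X i ω ≤ x then (1:ℝ) else 0) / n := by
  unfold edf
  congr 1
  rw [Finset.card_filter]
  push_cast
  rfl

section Main

variable {Ω : Type*} [MeasurableSpace Ω] (μ : Measure Ω) [IsProbabilityMeasure μ]
    (X : ℕ → Ω → ℝ) (hmeas : ∀ i, Measurable (X i))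

lemma edf_tendsto (hmeas : ∀ i, Measurable (X i))
    (hindep : iIndepFun X μ)
    (hident : ∀ i, IdentDistrib (X i) (X 0) μ μ) (x : ℝ) :
    ∀ᵐ ω ∂μ, Tendsto (fun n => edf X n ω x) atTop (𝓝 ((μ {ω | X 0 ω ≤ x}).toReal)) := by
  classical
  set g : ℝ → ℝ := fun r => if r ≤ x then (1:ℝ) else 0 with hg_def
  have hg : Measurable g := by
    have : g = (Set.Iic x).indicator (fun _ => (1:ℝ)) := by
      ext r; simp [g, Set.indicator_apply, Set.mem_Iic]
    rw [this]
    exact measurable_const.indicator measurableSet_Iic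
  set Y : ℕ → Ω → ℝ := fun i ω => if X i ω ≤ x then (1:ℝ) else 0 with hY_def
  have hYg : ∀ i, Y i = g ∘ X i := fun i => rfl
  have hYind : Y 0 = (X 0 ⁻¹' Set.Iic x).indicator (fun _ => (1:ℝ)) := by
    ext ω; simp [Y, Set.indicator_apply, Set.mem_Iic]
  have hint : Integrable (Y 0) μ := by
    rw [hYind]
    exact (integrable_const (1:ℝ)).indicator (hmeas 0 measurableSet_Iic)
  have hindY : Pairwise (Function.onFun (fun f g => IndepFun f g μ) Y) := fun i j hij =>
    (hindep.indepFun hij).comp hg hg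
  have hidentY : ∀ i, IdentDistrib (Y i) (Y 0) μ μ := fun i => (hident i).comp hg
  have hEY : μ[Y 0] = (μ {ω | X 0 ω ≤ x}).toReal := by
    rw [hYind, integral_indicator_const (1:ℝ) (hmeas 0 measurableSet_Iic), smul_eq_mul, mul_one]
    rfl
  have h := strong_law_ae_real Y hint hindY hidentY
  rw [hEY] at h
  filter_upwards [h] with ω hω
  have : (fun n => edf X n ω x) = fun n : ℕ => (∑ i ∈ Finset.range n, Y i ω) / n := by
    funext n; exact edf_eq_sum X n ω x
  rw [this]
  exact hω


lemma edf_osc (hmeas : ∀ i, Measurable (X i))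
    (hindep : iIndepFun X μ)
    (hident : ∀ i, IdentDistrib (X i) (X 0) μ μ) {p : ℝ} (hp : p ∈ Set.Ioo (0:ℝ) 1)
    (x : ℝ) (hx : (μ {ω | X 0 ω ≤ x}).toReal = p) :
    ∀ᵐ ω ∂μ, (∀ N : ℕ, ∃ n ≥ N, edf X n ω x < p) ∧ (∀ N : ℕ, ∃ n ≥ N, p < edf X n ω x) := by
  classical
  set g : ℝ → ℝ := fun r => if r ≤ x then (1:ℝ) else 0 with hg_def
  have hg : Measurable g := by
    have : g = (Set.Iic x).indicator (fun _ => (1:ℝ)) := by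
      ext r; simp [g, Set.indicator_apply, Set.mem_Iic]
    rw [this]
    exact measurable_const.indicator measurableSet_Iic
  set Y : ℕ → Ω → ℝ := fun i ω => if X i ω ≤ x then (1:ℝ) else 0 with hY_def
  have hYmeas : ∀ i, StronglyMeasurable (Y i) := fun i =>
    (hg.comp (hmeas i)).stronglyMeasurable
  have hYrange : ∀ i ω, Y i ω = 0 ∨ Y i ω = 1 := by
    intro i ω
    by_cases h : X i ω ≤ x
    · right; simp [Y, h]
    · left; simp [Y, h]
  have hYnonneg : ∀ i ω, 0 ≤ Y i ω := by
    intro i ω; rcases hYrange i ω with h | h <;> rw [h] <;> norm_num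
  have hYle : ∀ i ω, Y i ω ≤ 1 := by
    intro i ω; rcases hYrange i ω with h | h <;> rw [h] <;> norm_num
  have hYint : ∀ i, Integrable (Y i) μ := by
    intro i
    have hYind : Y i = (X i ⁻¹' Set.Iic x).indicator (fun _ => (1:ℝ)) := by
      ext ω; simp [Y, Set.indicator_apply, Set.mem_Iic]
    rw [hYind]
    exact (integrable_const (1:ℝ)).indicator (hmeas i measurableSet_Iic)
  have hEY : ∀ i, μ[Y i] = p := by
    intro i
    have hid : IdentDistrib (Y i) (Y 0) μ μ := (hident i).comp hg
    rw [hid.integral_eq]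
    have hYind : Y 0 = (X 0 ⁻¹' Set.Iic x).indicator (fun _ => (1:ℝ)) := by
      ext ω; simp [Y, Set.indicator_apply, Set.mem_Iic]
    rw [hYind, integral_indicator_const (1:ℝ) (hmeas 0 measurableSet_Iic), smul_eq_mul, mul_one,
      ← hx]
    rfl
  have hiY : iIndepFun Y μ :=
    hindep.comp (fun _ => g) (fun _ => hg)
  set ℱ := MeasureTheory.Filtration.natural Y hYmeas with hFil
  set f : ℕ → Ω → ℝ := fun n ω => (∑ i ∈ Finset.range (n+1), Y i ω) - ((n:ℝ)+1) * p with hf_def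
  have hfint : ∀ n, Integrable (f n) μ := by
    intro n
    exact (integrable_finset_sum _ fun i _ => hYint i).sub (integrable_const _)
  have hadp : StronglyAdapted ℱ f := by
    intro n
    have hsum : Measurable[ℱ n] fun ω => ∑ i ∈ Finset.range (n+1), Y i ω := by
      refine Finset.measurable_sum _ fun i hi => ?_
      have h1 : StronglyMeasurable[ℱ i] (Y i) := MeasureTheory.Filtration.stronglyAdapted_natural hYmeas i
      exact (h1.mono (ℱ.mono (Finset.mem_range_succ_iff.mp hi))).measurable
    exact (Measurable.stronglyMeasurable (hsum.sub measurable_const))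
  have hmart : Martingale f ℱ μ := by
    refine ⟨hadp, fun i j hij => ?_⟩
    have hcard : ((Finset.Ico (i+1) (j+1)).card : ℝ) = (j:ℝ) - i := by
      rw [Nat.card_Ico, Nat.succ_sub_succ]
      rw [Nat.cast_sub hij]
    have hdecomp : f j = f i + fun ω => ∑ k ∈ Finset.Ico (i+1) (j+1), (Y k ω - p) := by
      funext ω
      have hsum := Finset.sum_range_add_sum_Ico (fun k => Y k ω) (Nat.succ_le_succ hij)
      simp only [f, Pi.add_apply]
      rw [Finset.sum_sub_distrib, Finset.sum_const, nsmul_eq_mul, hcard]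
      linear_combination -hsum
    have h1 : μ[f j|ℱ i]
        =ᵐ[μ] μ[f i|ℱ i] + μ[(fun ω => ∑ k ∈ Finset.Ico (i+1) (j+1), (Y k ω - p))|ℱ i] := by
      rw [hdecomp]
      exact condExp_add (hfint i)
        (integrable_finset_sum _ fun k _ => (hYint k).sub (integrable_const _)) _
    have h2 : μ[f i|ℱ i] = f i :=
      condExp_of_stronglyMeasurable (ℱ.le i) (hadp i) (hfint i)
    have h3 : μ[(fun ω => ∑ k ∈ Finset.Ico (i+1) (j+1), (Y k ω - p))|ℱ i]
        =ᵐ[μ] ∑ k ∈ Finset.Ico (i+1) (j+1), μ[(fun ω => Y k ω - p)|ℱ i] := by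
      have := condExp_finsetSum (m := ℱ i) (μ := μ)
        (f := fun k ω => Y k ω - p) (s := Finset.Ico (i+1) (j+1))
        (fun k _ => (hYint k).sub (integrable_const _))
      convert this using 2
      · funext ω; simp [Finset.sum_apply]
    have h5 : ∀ k ∈ Finset.Ico (i+1) (j+1), μ[(fun ω => Y k ω - p)|ℱ i] =ᵐ[μ] fun _ => (0:ℝ) := by
      intro k hk
      have hlt : i < k := Nat.lt_of_succ_le (Finset.mem_Ico.mp hk).1
      have hsub : μ[(fun ω => Y k ω - p)|ℱ i] =ᵐ[μ] μ[Y k|ℱ i] - μ[(fun _ => p)|ℱ i] :=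
        condExp_sub (hYint k) (integrable_const _) _
      have hc : μ[(fun _ : Ω => p)|ℱ i] = fun _ => p := condExp_const (ℱ.le i) p
      have hind := hiY.condExp_natural_ae_eq_of_lt hYmeas hlt
      rw [← hFil] at hind
      filter_upwards [hsub, hind] with ω hw1 hw2
      rw [hw1, Pi.sub_apply, hw2, hc, hEY k, sub_self]
    have h6 : (∑ k ∈ Finset.Ico (i+1) (j+1), μ[(fun ω => Y k ω - p)|ℱ i])
        =ᵐ[μ] fun _ => (0:ℝ) := by
      have h := eventuallyEq_sum h5
      refine h.trans (Filter.EventuallyEq.of_eq ?_)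
      funext ω
      simp [Finset.sum_apply]
    refine h1.trans ?_
    rw [h2]
    refine (EventuallyEq.add EventuallyEq.rfl (h3.trans h6)).trans ?_
    exact Filter.EventuallyEq.of_eq (add_zero (f i))
  have hdiffeq : ∀ n ω, f (n+1) ω - f n ω = Y (n+1) ω - p := by
    intro n ω
    simp only [f]
    rw [Finset.sum_range_succ (f := fun i => Y i ω) (n := n+1)]
    push_cast
    ring
  have hbdd : ∀ᵐ ω ∂μ, ∀ i, |f (i+1) ω - f i ω| ≤ ((1:ℝ≥0) : ℝ) := by
    refine ae_of_all _ fun ω i => ?_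
    rw [hdiffeq i ω, NNReal.coe_one]
    rcases hYrange (i+1) ω with h | h <;> rw [h] <;>
      rw [abs_le] <;> constructor <;> linarith [hp.1, hp.2]
  have hnoconv : ∀ ω, ¬ ∃ c, Tendsto (fun n => f n ω) atTop (𝓝 c) := by
    rintro ω ⟨c, hc⟩
    have hdiff : Tendsto (fun n => f (n+1) ω - f n ω) atTop (𝓝 0) := by
      have h := (hc.comp (tendsto_add_atTop_nat 1)).sub hc
      simpa using h
    set ε := min p (1-p) with hε_def
    have hε : 0 < ε := lt_min hp.1 (by linarith [hp.2])
    obtain ⟨N, hN⟩ := Metric.tendsto_atTop.mp hdiff ε hε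
    have h1 := hN N le_rfl
    rw [Real.dist_eq, sub_zero] at h1
    have h2 : ε ≤ |f (N+1) ω - f N ω| := by
      rw [hdiffeq N ω]
      rcases hYrange (N+1) ω with h | h <;> rw [h]
      · rw [abs_of_nonpos (by linarith [hp.1] : (0:ℝ) - p ≤ 0)]
        simp only [zero_sub, neg_neg]
        exact min_le_left _ _
      · rw [abs_of_nonneg (by linarith [hp.2] : (0:ℝ) ≤ 1 - p)]
        exact min_le_right _ _
    linarith
  filter_upwards [hmart.bddAbove_range_iff_bddBelow_range hbdd,
    hmart.submartingale.bddAbove_iff_exists_tendsto hbdd] with ω hiff htend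
  have hnA : ¬ BddAbove (Set.range fun n => f n ω) := fun h => hnoconv ω (htend.mp h)
  have hnB : ¬ BddBelow (Set.range fun n => f n ω) := fun h => hnA (hiff.mpr h)
  have hedf : ∀ n : ℕ, edf X (n+1) ω x = (∑ i ∈ Finset.range (n+1), Y i ω) / ((n:ℝ)+1) := by
    intro n
    rw [edf_eq_sum]
    push_cast
    rfl
  constructor
  · intro N
    obtain ⟨z, ⟨n, rfl⟩, hz⟩ := not_bddBelow_iff.mp hnB (-(N:ℝ))
    have hsum0 : 0 ≤ ∑ i ∈ Finset.range (n+1), Y i ω :=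
      Finset.sum_nonneg fun i _ => hYnonneg i ω
    have hflt : f n ω < 0 := lt_of_lt_of_le hz (neg_nonpos.mpr (Nat.cast_nonneg N))
    have hge : -((n:ℝ)+1) ≤ f n ω := by
      have hple : ((n:ℝ)+1) * p ≤ (n:ℝ)+1 := by nlinarith [hp.2, Nat.cast_nonneg (α := ℝ) n]
      simp only [f]
      linarith
    have hN : N ≤ n + 1 := by
      have h0 : (N:ℝ) < (n:ℝ)+1 := by linarith
      exact_mod_cast h0.le
    refine ⟨n+1, hN, ?_⟩
    rw [hedf n, div_lt_iff₀ (show (0:ℝ) < (n:ℝ)+1 by positivity)]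
    have : (∑ i ∈ Finset.range (n+1), Y i ω) - ((n:ℝ)+1) * p < 0 := hflt
    linarith
  · intro N
    obtain ⟨z, ⟨n, rfl⟩, hz⟩ := not_bddAbove_iff.mp hnA ((N:ℝ))
    have hfgt : 0 < f n ω := lt_of_le_of_lt (Nat.cast_nonneg N) hz
    have hle : f n ω ≤ ((n:ℝ)+1) := by
      have hsum1 : ∑ i ∈ Finset.range (n+1), Y i ω ≤ ((n:ℝ)+1) := by
        calc ∑ i ∈ Finset.range (n+1), Y i ω ≤ ∑ _i ∈ Finset.range (n+1), (1:ℝ) :=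
              Finset.sum_le_sum fun i _ => hYle i ω
          _ = ((n:ℝ)+1) := by simp
      have hp0 : 0 ≤ ((n:ℝ)+1) * p := mul_nonneg (by positivity) hp.1.le
      simp only [f]
      linarith
    have hN : N ≤ n + 1 := by
      have h0 : (N:ℝ) < (n:ℝ)+1 := by linarith
      exact_mod_cast h0.le
    refine ⟨n+1, hN, ?_⟩
    rw [hedf n, lt_div_iff₀ (show (0:ℝ) < (n:ℝ)+1 by positivity)]
    have : 0 < (∑ i ∈ Finset.range (n+1), Y i ω) - ((n:ℝ)+1) * p := hfgt
    linarith

end Main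

/-- Almost surely, the limsup of the right sample quantiles equals `rq F p` and
their liminf equals `lq F p`. -/
theorem limsup_liminf_right_sample_quantile
    {Ω : Type*} [MeasurableSpace Ω] (μ : Measure Ω) [IsProbabilityMeasure μ]
    (X : ℕ → Ω → ℝ) (hmeas : ∀ i, Measurable (X i))
    (hindep : iIndepFun X μ)
    (hident : ∀ i, IdentDistrib (X i) (X 0) μ μ)
    (F : ℝ → ℝ) (hF : ∀ x, F x = (μ {ω | X 0 ω ≤ x}).toReal)
    (p : ℝ) (hp : p ∈ Set.Ioo (0 : ℝ) 1) :
    ∀ᵐ ω ∂μ, Filter.limsup (fun n => rq (edf X n ω) p) atTop = rq F p ∧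
      Filter.liminf (fun n => rq (edf X n ω) p) atTop = lq F p := by
  have hFmono : Monotone F := by
    intro a b hab
    rw [hF a, hF b]
    exact ENNReal.toReal_mono (measure_ne_top μ _)
      (measure_mono fun ω (h : X 0 ω ≤ a) => le_trans h hab)
  set ν : Measure ℝ := μ.map (X 0) with hν_def
  haveI : IsProbabilityMeasure ν := Measure.isProbabilityMeasure_map (hmeas 0).aemeasurable
  have hFcdf : ∀ x, F x = ProbabilityTheory.cdf ν x := by
    intro x
    rw [hF, cdf_eq_real, measureReal_def, hν_def, Measure.map_apply (hmeas 0) measurableSet_Iic]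
    rfl
  -- a rational point where F < p
  obtain ⟨ya, hya⟩ := ((tendsto_cdf_atBot ν).eventually_lt_const hp.1).exists
  obtain ⟨a₀, ha₀q⟩ := exists_rat_lt ya
  have ha₀ : F (a₀:ℝ) < p := by
    refine lt_of_le_of_lt (hFmono ha₀q.le) ?_
    rw [hFcdf]; exact hya
  -- a rational point where p < F
  obtain ⟨yb, hyb⟩ := ((tendsto_cdf_atTop ν).eventually_const_lt hp.2).exists
  obtain ⟨b₀, hb₀q⟩ := exists_rat_gt yb
  have hb₀ : p < F (b₀:ℝ) := by
    refine lt_of_lt_of_le ?_ (hFmono hb₀q.le)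
    rw [hFcdf]; exact hyb
  -- facts about F and its quantiles
  have hSbdd : BddBelow {y : ℝ | p < F y} :=
    ⟨(a₀:ℝ), fun y hy => le_of_not_gt fun h => absurd (hy.trans_le (hFmono h.le))
      (not_lt.2 ha₀.le)⟩
  have hSne : Set.Nonempty {y : ℝ | p < F y} := ⟨(b₀:ℝ), hb₀⟩
  have hTbdd : BddBelow {y : ℝ | p ≤ F y} :=
    ⟨(a₀:ℝ), fun y hy => le_of_not_gt fun h => absurd (hy.trans (hFmono h.le))
      (not_le.2 ha₀)⟩
  have hTne : Set.Nonempty {y : ℝ | p ≤ F y} := ⟨(b₀:ℝ), hb₀.le⟩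
  have hF5 : ∀ z : ℝ, z < rq F p → F z ≤ p := by
    intro z hz
    by_contra h
    exact absurd (rq_le_of hFmono ha₀.le (not_le.mp h)) (not_le.mpr hz)
  have hF6 : ∀ z : ℝ, rq F p < z → p < F z := by
    intro z hz
    unfold rq at hz
    obtain ⟨y, hy, hyz⟩ := (csInf_lt_iff hSbdd hSne).mp hz
    exact hy.trans_le (hFmono hyz.le)
  have hF3 : ∀ z : ℝ, z < lq F p → F z < p := by
    intro z hz
    by_contra h
    exact absurd (lq_le_of hFmono ha₀ (not_lt.mp h)) (not_le.mpr hz)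
  have hF4 : ∀ z : ℝ, lq F p < z → p ≤ F z := by
    intro z hz
    unfold lq at hz
    obtain ⟨y, hy, hyz⟩ := (csInf_lt_iff hTbdd hTne).mp hz
    exact hy.trans (hFmono hyz.le)
  -- the almost-sure events
  have hT : ∀ᵐ ω ∂μ, ∀ q : ℚ, Tendsto (fun n => edf X n ω (q:ℝ)) atTop (𝓝 (F (q:ℝ))) := by
    rw [ae_all_iff]
    intro q
    filter_upwards [edf_tendsto μ X hmeas hindep hident (q:ℝ)] with ω h
    rw [hF (q:ℝ)]
    exact h
  have hO : ∀ᵐ ω ∂μ, ∀ q : ℚ, F (q:ℝ) = p →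
      ((∀ N : ℕ, ∃ n ≥ N, edf X n ω (q:ℝ) < p) ∧ (∀ N : ℕ, ∃ n ≥ N, p < edf X n ω (q:ℝ))) := by
    rw [ae_all_iff]
    intro q
    by_cases hq : F (q:ℝ) = p
    · have hx : (μ {ω | X 0 ω ≤ (q:ℝ)}).toReal = p := by rw [← hF]; exact hq
      filter_upwards [edf_osc μ X hmeas hindep hident hp (q:ℝ) hx] with ω h _
      exact h
    · exact ae_of_all _ fun ω h => absurd h hq
  filter_upwards [hT, hO] with ω hTω hOω
  set L : ℕ → ℝ := fun n => rq (edf X n ω) p with hL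
  have hEmono : ∀ n, Monotone (edf X n ω) := fun n => edf_mono X n ω
  have hea : ∀ᶠ n in atTop, edf X n ω (a₀:ℝ) < p := (hTω a₀).eventually_lt_const ha₀
  have heb : ∀ᶠ n in atTop, p < edf X n ω (b₀:ℝ) := (hTω b₀).eventually_const_lt hb₀
  have hband : ∀ᶠ n in atTop, (a₀:ℝ) ≤ L n ∧ L n ≤ (b₀:ℝ) := by
    filter_upwards [hea, heb] with n h1 h2
    exact ⟨le_rq_of (hEmono n) h1.le h2, rq_le_of (hEmono n) h1.le h2⟩
  have hbddA : IsBoundedUnder (· ≤ ·) atTop L :=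
    isBoundedUnder_of_eventually_le (hband.mono fun n h => h.2)
  have hbddB : IsBoundedUnder (· ≥ ·) atTop L :=
    isBoundedUnder_of_eventually_ge (hband.mono fun n h => h.1)
  have h_limsup_le : limsup L atTop ≤ rq F p := by
    by_contra hcon
    push_neg at hcon
    obtain ⟨q, hq1, hq2⟩ := exists_rat_btwn hcon
    have hpq : p < F (q:ℝ) := hF6 _ hq1
    have hev : ∀ᶠ n in atTop, L n ≤ (q:ℝ) := by
      filter_upwards [(hTω q).eventually_const_lt hpq, hea] with n h1 h2
      exact rq_le_of (hEmono n) h2.le h1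
    exact absurd (limsup_le_of_le hbddB.isCoboundedUnder_le hev) (not_le.mpr hq2)
  have h_le_limsup : rq F p ≤ limsup L atTop := by
    by_contra hcon
    push_neg at hcon
    obtain ⟨q, hq1, hq2⟩ := exists_rat_btwn hcon
    have hpq : F (q:ℝ) ≤ p := hF5 _ hq2
    have hfreq : ∃ᶠ n in atTop, edf X n ω (q:ℝ) ≤ p := by
      rcases eq_or_lt_of_le hpq with h | h
      · refine Filter.frequently_atTop.2 fun N => ?_
        obtain ⟨n, hn, h'⟩ := (hOω q h).1 N
        exact ⟨n, hn, h'.le⟩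
      · exact ((hTω q).eventually_lt_const h).frequently.mono fun n hn => hn.le
    have hfreq2 : ∃ᶠ n in atTop, (q:ℝ) ≤ L n :=
      (hfreq.and_eventually heb).mono fun n h => le_rq_of (hEmono n) h.1 h.2
    exact absurd (le_limsup_of_frequently_le hfreq2 hbddA) (not_le.mpr hq1)
  have h_liminf_le : liminf L atTop ≤ lq F p := by
    by_contra hcon
    push_neg at hcon
    obtain ⟨q, hq1, hq2⟩ := exists_rat_btwn hcon
    have hpq : p ≤ F (q:ℝ) := hF4 _ hq1
    have hfreq : ∃ᶠ n in atTop, p < edf X n ω (q:ℝ) := by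
      rcases eq_or_lt_of_le hpq with h | h
      · refine Filter.frequently_atTop.2 fun N => (hOω q h.symm).2 N
      · exact ((hTω q).eventually_const_lt h).frequently
    have hfreq2 : ∃ᶠ n in atTop, L n ≤ (q:ℝ) :=
      (hfreq.and_eventually hea).mono fun n h => rq_le_of (hEmono n) h.2.le h.1
    exact absurd (liminf_le_of_frequently_le hfreq2 hbddB) (not_le.mpr hq2)
  have h_le_liminf : lq F p ≤ liminf L atTop := by
    by_contra hcon
    push_neg at hcon
    obtain ⟨q, hq1, hq2⟩ := exists_rat_btwn hcon
    have hpq : F (q:ℝ) < p := hF3 _ hq2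
    have hev : ∀ᶠ n in atTop, (q:ℝ) ≤ L n := by
      filter_upwards [(hTω q).eventually_lt_const hpq, heb] with n h1 h2
      exact le_rq_of (hEmono n) h1.le h2
    exact absurd (le_liminf_of_le hbddA.isCoboundedUnder_ge hev) (not_le.mpr hq1)
  exact ⟨le_antisymm h_limsup_le h_le_limsup, le_antisymm h_liminf_le h_le_liminf⟩
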